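/- arXiv:1810.12179 — 2 statements merged into one kernel-verified Lean document; each statement's English description precedes it below -/
import Mathlib

section
/- Let G^N be the group of characters of the truncated Hopf algebra H_N with the homogeneous norm |X| = max_{k≤N}(k!⟪X_k⟫)^{1/k} + max_{k≤N}(k!⟪X_k^{-1}⟫)^{1/k}, where X_k is the restriction of X to H_{(k)} and ⟪·⟫ is a submultiplicative norm on H_N*. Then this norm is sub-additive: |X ⋆ Y| ≤ |X| + |Y| for all X, Y ∈ G^N. -/
open TensorProduct

variable {H : Type*} [Ring H] [Bialgebra ℝ H]

/-- Convolution product on the full linear dual of a coalgebra. -/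
noncomputable def conv (f g : Module.Dual ℝ H) : Module.Dual ℝ H :=
  (TensorProduct.lid ℝ ℝ).toLinearMap ∘ₗ TensorProduct.map f g ∘ₗ Coalgebra.comul

/-- The homogeneous norm `|X| = max_{1≤k≤N}(k!⟪X_k⟫)^{1/k} + max_{1≤k≤N}(k!⟪X_k⁻¹⟫)^{1/k}`,
given through the homogeneous components of `X` and of its convolution inverse. -/
noncomputable def homn (N : ℕ) (hN : 1 ≤ N) (nrm : Module.Dual ℝ H → ℝ)
    (Ac Aic : ℕ → Module.Dual ℝ H) : ℝ :=
  Finset.sup' (Finset.Icc 1 N) (Finset.nonempty_Icc.2 hN)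
    (fun k => (((Nat.factorial k : ℝ)) * nrm (Ac k)) ^ ((k : ℝ)⁻¹)) +
  Finset.sup' (Finset.Icc 1 N) (Finset.nonempty_Icc.2 hN)
    (fun k => (((Nat.factorial k : ℝ)) * nrm (Aic k)) ^ ((k : ℝ)⁻¹))

theorem conv_counit_left (f : Module.Dual ℝ H) : conv Coalgebra.counit f = f := by
  ext x
  simp only [conv, LinearMap.comp_apply, LinearEquiv.coe_coe]
  rw [← LinearMap.lTensor_comp_rTensor, LinearMap.comp_apply,
    Coalgebra.rTensor_counit_comul]
  simp

theorem conv_counit_right (f : Module.Dual ℝ H) : conv f Coalgebra.counit = f := by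
  ext x
  simp only [conv, LinearMap.comp_apply, LinearEquiv.coe_coe]
  rw [← LinearMap.rTensor_comp_lTensor, LinearMap.comp_apply,
    Coalgebra.lTensor_counit_comul]
  simp

theorem nrm_sum_le (nrm : Module.Dual ℝ H → ℝ)
    (htri : ∀ f g, nrm (f + g) ≤ nrm f + nrm g) (n : ℕ) (F : ℕ → Module.Dual ℝ H) :
    nrm (∑ j ∈ Finset.range (n + 1), F j) ≤ ∑ j ∈ Finset.range (n + 1), nrm (F j) := by
  induction n with
  | zero => simp
  | succ n ih =>
      rw [Finset.sum_range_succ, Finset.sum_range_succ (fun j => nrm (F j))]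
      exact (htri _ _).trans (by linarith)

theorem key_est (N : ℕ) (hN : 1 ≤ N) (nrm : Module.Dual ℝ H → ℝ)
    (hnn : ∀ f, 0 ≤ nrm f)
    (htri : ∀ f g, nrm (f + g) ≤ nrm f + nrm g)
    (hsub : ∀ f g, nrm (conv f g) ≤ nrm f * nrm g)
    (A B : ℕ → Module.Dual ℝ H)
    (hA0 : A 0 = Coalgebra.counit) (hB0 : B 0 = Coalgebra.counit)
    (k : ℕ) (hk : k ∈ Finset.Icc 1 N) :
    (((Nat.factorial k : ℝ)) *
        nrm (∑ j ∈ Finset.range (k + 1), conv (A j) (B (k - j)))) ^ ((k : ℝ)⁻¹) ≤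
      Finset.sup' (Finset.Icc 1 N) (Finset.nonempty_Icc.2 hN)
        (fun k => (((Nat.factorial k : ℝ)) * nrm (A k)) ^ ((k : ℝ)⁻¹)) +
      Finset.sup' (Finset.Icc 1 N) (Finset.nonempty_Icc.2 hN)
        (fun k => (((Nat.factorial k : ℝ)) * nrm (B k)) ^ ((k : ℝ)⁻¹)) := by
  obtain ⟨hk1, hkN⟩ := Finset.mem_Icc.mp hk
  set a := Finset.sup' (Finset.Icc 1 N) (Finset.nonempty_Icc.2 hN)
        (fun k => (((Nat.factorial k : ℝ)) * nrm (A k)) ^ ((k : ℝ)⁻¹)) with ha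
  set b := Finset.sup' (Finset.Icc 1 N) (Finset.nonempty_Icc.2 hN)
        (fun k => (((Nat.factorial k : ℝ)) * nrm (B k)) ^ ((k : ℝ)⁻¹)) with hb
  have hfn : ∀ (C : ℕ → Module.Dual ℝ H) (j : ℕ), (0:ℝ) ≤ (Nat.factorial j : ℝ) * nrm (C j) :=
    fun C j => mul_nonneg (by positivity) (hnn _)
  have ha0 : 0 ≤ a := le_trans (Real.rpow_nonneg (hfn A 1) _)
    (Finset.le_sup' (fun k => (((Nat.factorial k : ℝ)) * nrm (A k)) ^ ((k : ℝ)⁻¹))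
      (Finset.mem_Icc.mpr ⟨le_refl 1, hN⟩))
  have hb0 : 0 ≤ b := le_trans (Real.rpow_nonneg (hfn B 1) _)
    (Finset.le_sup' (fun k => (((Nat.factorial k : ℝ)) * nrm (B k)) ^ ((k : ℝ)⁻¹))
      (Finset.mem_Icc.mpr ⟨le_refl 1, hN⟩))
  have hpow : ∀ (C : ℕ → Module.Dual ℝ H) (c : ℝ), 0 ≤ c →
      (Finset.sup' (Finset.Icc 1 N) (Finset.nonempty_Icc.2 hN)
        (fun k => (((Nat.factorial k : ℝ)) * nrm (C k)) ^ ((k : ℝ)⁻¹)) = c) →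
      ∀ j, 1 ≤ j → j ≤ N → (Nat.factorial j : ℝ) * nrm (C j) ≤ c ^ j := by
    intro C c hc hceq j hj1 hjN
    have h := Finset.le_sup' (fun k => (((Nat.factorial k : ℝ)) * nrm (C k)) ^ ((k : ℝ)⁻¹))
      (Finset.mem_Icc.mpr ⟨hj1, hjN⟩)
    rw [hceq] at h
    have h2 : (((Nat.factorial j : ℝ) * nrm (C j)) ^ ((j : ℝ)⁻¹)) ^ j ≤ c ^ j :=
      pow_le_pow_left₀ (Real.rpow_nonneg (hfn C j) _) h j
    rwa [← Real.rpow_natCast (((Nat.factorial j : ℝ) * nrm (C j)) ^ ((j : ℝ)⁻¹)) j,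
      ← Real.rpow_mul (hfn C j), inv_mul_cancel₀ (by positivity), Real.rpow_one] at h2
  -- main bound
  have hmain : (Nat.factorial k : ℝ) *
      nrm (∑ j ∈ Finset.range (k + 1), conv (A j) (B (k - j))) ≤ (a + b) ^ k := by
    have h1 := nrm_sum_le nrm htri k (fun j => conv (A j) (B (k - j)))
    have h2 : ∀ j ∈ Finset.range (k + 1),
        (Nat.factorial k : ℝ) * nrm (conv (A j) (B (k - j))) ≤
          a ^ j * b ^ (k - j) * (Nat.choose k j : ℝ) := by
      intro j hj
      have hjk : j ≤ k := Nat.lt_succ_iff.mp (Finset.mem_range.mp hj)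
      have hfact : (Nat.factorial k : ℝ) =
          (Nat.choose k j : ℝ) * (Nat.factorial j : ℝ) * (Nat.factorial (k - j) : ℝ) := by
        rw [← Nat.cast_mul, ← Nat.cast_mul, Nat.choose_mul_factorial_mul_factorial hjk]
      rcases Nat.eq_zero_or_pos j with hj0 | hj1
      · subst hj0
        simp only [hA0, conv_counit_left, Nat.sub_zero, pow_zero, one_mul, Nat.choose_zero_right,
          Nat.cast_one, mul_one]
        exact hpow B b hb0 hb.symm k hk1 hkN
      rcases Nat.eq_or_lt_of_le hjk with hjk' | hjk'
      · subst hjk'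
        simp only [Nat.sub_self, hB0, conv_counit_right, Nat.choose_self, Nat.cast_one, mul_one,
          pow_zero]
        exact hpow A a ha0 ha.symm j hj1 hkN
      · have hAj : (Nat.factorial j : ℝ) * nrm (A j) ≤ a ^ j :=
          hpow A a ha0 ha.symm j hj1 (le_trans (Nat.le_of_lt hjk') hkN)
        have hBj : (Nat.factorial (k - j) : ℝ) * nrm (B (k - j)) ≤ b ^ (k - j) :=
          hpow B b hb0 hb.symm (k - j) (by omega) (by omega)
        calc (Nat.factorial k : ℝ) * nrm (conv (A j) (B (k - j)))
            ≤ (Nat.factorial k : ℝ) * (nrm (A j) * nrm (B (k - j))) := by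
              exact mul_le_mul_of_nonneg_left (hsub _ _) (by positivity)
          _ = ((Nat.factorial j : ℝ) * nrm (A j)) *
              ((Nat.factorial (k - j) : ℝ) * nrm (B (k - j))) * (Nat.choose k j : ℝ) := by
              rw [hfact]; ring
          _ ≤ a ^ j * b ^ (k - j) * (Nat.choose k j : ℝ) := by
              apply mul_le_mul_of_nonneg_right _ (by positivity)
              exact mul_le_mul hAj hBj (hfn B _) (pow_nonneg ha0 j)
    calc (Nat.factorial k : ℝ) * nrm (∑ j ∈ Finset.range (k + 1), conv (A j) (B (k - j)))
        ≤ (Nat.factorial k : ℝ) * ∑ j ∈ Finset.range (k + 1), nrm (conv (A j) (B (k - j))) :=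
          mul_le_mul_of_nonneg_left h1 (by positivity)
      _ = ∑ j ∈ Finset.range (k + 1), (Nat.factorial k : ℝ) * nrm (conv (A j) (B (k - j))) :=
          Finset.mul_sum _ _ _
      _ ≤ ∑ j ∈ Finset.range (k + 1), a ^ j * b ^ (k - j) * (Nat.choose k j : ℝ) :=
          Finset.sum_le_sum h2
      _ = (a + b) ^ k := (add_pow a b k).symm
  calc ((Nat.factorial k : ℝ) *
        nrm (∑ j ∈ Finset.range (k + 1), conv (A j) (B (k - j)))) ^ ((k : ℝ)⁻¹)
      ≤ ((a + b) ^ k) ^ ((k : ℝ)⁻¹) := by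
        apply Real.rpow_le_rpow (hfn _ k) _ (by positivity)
        · exact hmain
    _ = a + b := by
        rw [← Real.rpow_natCast (a + b) k, ← Real.rpow_mul (by linarith),
          mul_inv_cancel₀ (by positivity), Real.rpow_one]

/-- The homogeneous norm on the character group `G^N` of a truncated graded Hopf
algebra is sub-additive: `|X ⋆ Y| ≤ |X| + |Y|`, where the degree-`k` component of
`X ⋆ Y` is `Σ_j X_j ⋆ Y_{k-j}` and its inverse is `Y⁻¹ ⋆ X⁻¹`. -/
theorem homogeneous_norm_subadditive
    (ℋ : ℕ → Submodule ℝ H)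
    (hcomul : ∀ n : ℕ, Submodule.map (Coalgebra.comul (R := ℝ) (A := H)) (ℋ n) ≤
      ⨆ p ∈ Finset.range (n + 1),
        Submodule.map₂ (TensorProduct.mk ℝ H H) (ℋ p) (ℋ (n - p)))
    (N : ℕ) (hN : 1 ≤ N)
    (nrm : Module.Dual ℝ H → ℝ)
    (hnn : ∀ f, 0 ≤ nrm f)
    (htri : ∀ f g, nrm (f + g) ≤ nrm f + nrm g)
    (hsub : ∀ f g, nrm (conv f g) ≤ nrm f * nrm g)
    (X Y Xi Yi : Module.Dual ℝ H)
    (Xc Yc Xic Yic : ℕ → Module.Dual ℝ H)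
    (hXc0 : Xc 0 = Coalgebra.counit) (hYc0 : Yc 0 = Coalgebra.counit)
    (hXic0 : Xic 0 = Coalgebra.counit) (hYic0 : Yic 0 = Coalgebra.counit)
    (hXc : ∀ k n, n ≠ k → ∀ x ∈ ℋ n, Xc k x = 0)
    (hYc : ∀ k n, n ≠ k → ∀ x ∈ ℋ n, Yc k x = 0)
    (hXic : ∀ k n, n ≠ k → ∀ x ∈ ℋ n, Xic k x = 0)
    (hYic : ∀ k n, n ≠ k → ∀ x ∈ ℋ n, Yic k x = 0)
    (hX : X = ∑ k ∈ Finset.range (N + 1), Xc k)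
    (hY : Y = ∑ k ∈ Finset.range (N + 1), Yc k)
    (hXi : Xi = ∑ k ∈ Finset.range (N + 1), Xic k)
    (hYi : Yi = ∑ k ∈ Finset.range (N + 1), Yic k)
    -- `X, Y` are characters and `Xi, Yi` their convolution inverses on `H_N`:
    (hXchar : ∀ a b : H, X (a * b) = X a * X b) (hX1 : X 1 = 1)
    (hYchar : ∀ a b : H, Y (a * b) = Y a * Y b) (hY1 : Y 1 = 1)
    (hXinv : ∀ x ∈ (⨆ k ∈ Finset.range (N + 1), ℋ k),
      conv X Xi x = Coalgebra.counit (R := ℝ) x ∧ conv Xi X x = Coalgebra.counit (R := ℝ) x)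
    (hYinv : ∀ x ∈ (⨆ k ∈ Finset.range (N + 1), ℋ k),
      conv Y Yi x = Coalgebra.counit (R := ℝ) x ∧ conv Yi Y x = Coalgebra.counit (R := ℝ) x) :
    homn N hN nrm
        (fun k => ∑ j ∈ Finset.range (k + 1), conv (Xc j) (Yc (k - j)))
        (fun k => ∑ j ∈ Finset.range (k + 1), conv (Yic j) (Xic (k - j))) ≤
      homn N hN nrm Xc Xic + homn N hN nrm Yc Yic := by
  simp only [homn]
  have h1 := Finset.sup'_le (Finset.nonempty_Icc.2 hN)
    (fun k => (((Nat.factorial k : ℝ)) *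
      nrm (∑ j ∈ Finset.range (k + 1), conv (Xc j) (Yc (k - j)))) ^ ((k : ℝ)⁻¹))
    (fun k hk => key_est N hN nrm hnn htri hsub Xc Yc hXc0 hYc0 k hk)
  have h2 := Finset.sup'_le (Finset.nonempty_Icc.2 hN)
    (fun k => (((Nat.factorial k : ℝ)) *
      nrm (∑ j ∈ Finset.range (k + 1), conv (Yic j) (Xic (k - j)))) ^ ((k : ℝ)⁻¹))
    (fun k hk => key_est N hN nrm hnn htri hsub Yic Xic hYic0 hXic0 k hk)
  linarith
end

section
/- Let F be a finite rooted forest and o : N_F → ℕ an admissible extended decoration, i.e. o(N_F) is an interval of integers containing 1, o is increasing with respect to the tree partial order, and for each j the set O_j = {x : o(x) = j} spans a subtree T_j of F. Then for each j, the boundary ∂_F T_j = {edges e : s(e) ∈ N_{T_j}, t(e) ∉ N_{T_j}} is an admissible cut of F: every path from a root of F to any node contains at most one edge of ∂_F T_j. -/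
/-- `anc parent x y` : `x` is an ancestor of `y` (the path from the root to `y`
passes through `x`) in the rooted forest with parent map `parent`; edges are
oriented away from the roots. -/
def anc {V : Type*} (parent : V → Option V) (x y : V) : Prop :=
  Relation.ReflTransGen (fun a b => parent b = some a) x y

/-- Two ancestors of the same node are comparable. -/
lemma anc_comparable {V : Type*} (parent : V → Option V) :
    ∀ x c₁ c₂, anc parent c₁ x → anc parent c₂ x →
      anc parent c₁ c₂ ∨ anc parent c₂ c₁ := by
  intro x c₁ c₂ h1 h2
  induction h2 with
  | refl => exact Or.inl h1
  | tail hcb hbx ih =>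
    rename_i b x'
    rcases (Relation.ReflTransGen.cases_tail h1) with rfl | ⟨b', hb', hpx⟩
    · exact Or.inr (hcb.tail hbx)
    · have : b' = b := by
        have := hpx.symm.trans hbx
        exact Option.some_injective _ this
      subst this
      exact ih hb'

/-- For an admissible extended decoration `o` on a rooted forest, the boundary
`∂_F T_j` of the subtree spanned by a level set `O_j = {x : o x = j}` is an
admissible cut: every path from a root to a node contains at most one boundary
edge (an edge `(p, c)` with `o p = j` and `o c ≠ j`). -/
theorem boundary_of_level_subtree_is_admissible_cut
    {V : Type*} (parent : V → Option V) (o : V → ℕ)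
    (hacyc : ∀ x y, anc parent x y → anc parent y x → x = y)
    (hpos : ∀ x, 1 ≤ o x)
    (hone : ∃ x, o x = 1)
    (hinterval : ∀ j, (∃ x, o x = j) → ∀ i, 1 ≤ i → i ≤ j → ∃ y, o y = i)
    (hmono : ∀ x y, anc parent x y → o x ≤ o y)
    (hsubtree : ∀ j, (∃ x, o x = j) → ∃ r, o r = j ∧
      (∀ x, o x = j → anc parent r x) ∧
      (∀ x z, o x = j → anc parent r z → anc parent z x → o z = j)) :
    ∀ (j : ℕ) (x p₁ c₁ p₂ c₂ : V),
      parent c₁ = some p₁ → parent c₂ = some p₂ →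
      o p₁ = j → o c₁ ≠ j → o p₂ = j → o c₂ ≠ j →
      anc parent c₁ x → anc parent c₂ x → c₁ = c₂ := by
  intro j x p₁ c₁ p₂ c₂ hpc1 hpc2 hop1 hoc1 hop2 hoc2 h1 h2
  have key : ∀ p c p' c' : V, parent c = some p → parent c' = some p' →
      o p = j → o c ≠ j → o p' = j → o c' ≠ j → anc parent c c' → c = c' := by
    intro p c p' c' hpc hpc' hp hc hp' hc' hcc'
    rcases Relation.ReflTransGen.cases_tail hcc' with rfl | ⟨b, hb, hbx⟩
    · rfl
    · have hbp : b = p' := Option.some_injective _ (hbx.symm.trans hpc')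
      subst hbp
      -- c is an (weak) ancestor of p', so o c ≤ o p' = j
      have h1 : o c ≤ j := hp' ▸ hmono _ _ hb
      -- p is an ancestor of c (one step), so j = o p ≤ o c
      have h2 : j ≤ o c := hp ▸ hmono _ _ (Relation.ReflTransGen.single hpc)
      exact absurd (le_antisymm h1 h2) hc
  rcases anc_comparable parent x c₁ c₂ h1 h2 with h | h
  · exact key p₁ c₁ p₂ c₂ hpc1 hpc2 hop1 hoc1 hop2 hoc2 h
  · exact (key p₂ c₂ p₁ c₁ hpc2 hpc1 hop2 hoc2 hop1 hoc1 h).symm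
end
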